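/- For the map f of the previous example, the point (0,0) has at least three distinct directional new Lyapunov exponents: along direction (1,1) the exponent is log 2, along direction (0,1) the exponent is −log 2, and along direction (1,0) the exponent is log 3. In particular a continuous (non-differentiable) map on ℝ² can have more than 2 distinct directional new Lyapunov exponents at a point. -/

import Mathlib

open Filter Set MeasureTheory

noncomputable section

/-- Points of the plane. -/
abbrev Pt := ℝ × ℝ

/-- The dynamical ball `B_x(δ, n)`. -/
def dynBall (f : Pt → Pt) (x : Pt) (δ : ℝ) (n : ℕ) : Set Pt :=
  {y | ∀ j ≤ n, ‖f^[j] x - f^[j] y‖ < δ}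

/-- The line `L_{x,v} = {x + k v : k ∈ ℝ}`. -/
def dynLine (x v : Pt) : Set Pt := {p | ∃ k : ℝ, p = x + k • v}

/-- The distortion `Δ(f,n,x,y) = ‖f^n x - f^n y‖ / ‖x - y‖`. -/
def dynDelta (f : Pt → Pt) (n : ℕ) (x y : Pt) : ℝ := ‖f^[n] x - f^[n] y‖ / ‖x - y‖

/-- `sup_{y ∈ B_x(δ,n)\{x}} Δ(f,n,x,y)`. -/
def dynSup (f : Pt → Pt) (n : ℕ) (x : Pt) (δ : ℝ) : ℝ :=
  sSup (dynDelta f n x '' (dynBall f x δ n \ {x}))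

/-- `sup_{y ∈ (B_x(δ,n)\{x}) ∩ L_{x,v}} Δ(f,n,x,y)`. -/
def dynSupDir (f : Pt → Pt) (n : ℕ) (x v : Pt) (δ : ℝ) : ℝ :=
  sSup (dynDelta f n x '' ((dynBall f x δ n \ {x}) ∩ dynLine x v))

/-- The top new Lyapunov exponent
`χ_N^+(f,x) = limsup_n lim_{δ→0} (1/n) log sup_{y ∈ B_x(δ,n)\{x}} Δ(f,n,x,y)`;
the limit as `δ → 0⁺` is realized as the infimum over `δ > 0` (valid by monotonicity). -/
def newLyap (f : Pt → Pt) (x : Pt) : ℝ :=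
  limsup (fun n : ℕ =>
    sInf ((fun δ => (n : ℝ)⁻¹ * Real.log (dynSup f n x δ)) '' Ioi (0 : ℝ))) atTop

/-- The directional new Lyapunov exponent `χ_N^+(f,x,v)`. -/
def newLyapDir (f : Pt → Pt) (x v : Pt) : ℝ :=
  limsup (fun n : ℕ =>
    sInf ((fun δ => (n : ℝ)⁻¹ * Real.log (dynSupDir f n x v δ)) '' Ioi (0 : ℝ))) atTop

/-- `g_n^δ(x) = sup_{y ∈ B_x(δ,n)\{x}} log Δ(f,n,x,y)`. -/
def gLog (f : Pt → Pt) (δ : ℝ) (n : ℕ) (x : Pt) : ℝ :=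
  sSup ((fun y => Real.log (dynDelta f n x y)) '' (dynBall f x δ n \ {x}))

open Classical in
/-- The piecewise map of the example: `f(x,y) = (2x, (3/2)x + (1/2)y)` if `x(y−x) > 0`;
`(3x−y, 2y)` if `x(y−x) < 0`; `(3x, y/2)` if `xy ≤ 0` and `x ≠ y`; `(2x, 2y)` if `x = y`. -/
def examplePiecewise (p : Pt) : Pt :=
  if p.1 = p.2 then (2 * p.1, 2 * p.2)
  else if p.1 * (p.2 - p.1) > 0 then (2 * p.1, 3 / 2 * p.1 + 1 / 2 * p.2)
  else if p.1 * (p.2 - p.1) < 0 then (3 * p.1 - p.2, 2 * p.2)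
  else (3 * p.1, p.2 / 2)

lemma f_diag (h : ℝ) : examplePiecewise (h, h) = (2*h, 2*h) := by
  simp [examplePiecewise]

lemma f_vert (h : ℝ) (hh : h ≠ 0) : examplePiecewise (0, h) = (0, h/2) := by
  simp [examplePiecewise, Ne.symm hh]

lemma f_horiz (h : ℝ) (hh : h ≠ 0) : examplePiecewise (h, 0) = (3*h, 0) := by
  have h1 : h * (0 - h) < 0 := by nlinarith [mul_self_pos.mpr hh]
  simp only [examplePiecewise, hh, if_false, if_neg (not_lt.mpr h1.le), if_pos h1]
  norm_num

lemma iter_diag (n : ℕ) (h : ℝ) : examplePiecewise^[n] (h, h) = (2^n * h, 2^n * h) := by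
  induction n with
  | zero => simp
  | succ n ih => rw [Function.iterate_succ_apply', ih, f_diag]; ring_nf

lemma iter_zero (n : ℕ) : examplePiecewise^[n] (0, 0) = (0, 0) := by
  simpa using iter_diag n 0

lemma iter_vert (n : ℕ) (h : ℝ) (hh : h ≠ 0) :
    examplePiecewise^[n] (0, h) = (0, h / 2^n) := by
  induction n with
  | zero => simp
  | succ n ih =>
      rw [Function.iterate_succ_apply', ih, f_vert _ (by positivity)]
      rw [Prod.mk.injEq]
      constructor
      · rfl
      · rw [pow_succ]; ring

lemma iter_horiz (n : ℕ) (h : ℝ) (hh : h ≠ 0) :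
    examplePiecewise^[n] (h, 0) = (3^n * h, 0) := by
  induction n with
  | zero => simp
  | succ n ih =>
      rw [Function.iterate_succ_apply', ih, f_horiz _ (by positivity)]
      rw [Prod.mk.injEq]
      constructor
      · rw [pow_succ]; ring
      · rfl

lemma norm_pt (a b : ℝ) : ‖((a, b) : Pt)‖ = max |a| |b| := by
  simp [Prod.norm_def, Real.norm_eq_abs]

lemma helper_newLyapDir (f : Pt → Pt) (x v : Pt) (r : ℝ)
    (h : ∀ n : ℕ, ∀ δ : ℝ, 0 < δ → dynSupDir f n x v δ = r ^ n) :
    newLyapDir f x v = Real.log r := by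
  unfold newLyapDir
  have hev : (fun n : ℕ => sInf ((fun δ => (n : ℝ)⁻¹ * Real.log (dynSupDir f n x v δ)) ''
      Ioi (0 : ℝ))) =ᶠ[atTop] fun _ => Real.log r := by
    filter_upwards [eventually_ge_atTop 1] with n hn
    have hne : (n : ℝ) ≠ 0 := Nat.cast_ne_zero.mpr (by omega)
    have himg : (fun δ => (n : ℝ)⁻¹ * Real.log (dynSupDir f n x v δ)) '' Ioi (0:ℝ)
        = {Real.log r} := by
      ext t
      simp only [mem_image, mem_Ioi, mem_singleton_iff]
      constructor
      · rintro ⟨δ, hδ, rfl⟩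
        rw [h n δ hδ, Real.log_pow, inv_mul_cancel_left₀ hne]
      · rintro rfl
        exact ⟨1, one_pos, by rw [h n 1 one_pos, Real.log_pow, inv_mul_cancel_left₀ hne]⟩
    rw [himg, csInf_singleton]
  rw [limsup_congr hev, limsup_const]

lemma norm_sub_zero (a b : ℝ) : ‖((0,0) : Pt) - (a, b)‖ = max |a| |b| := by
  have h : ((0,0) : Pt) - (a, b) = (-a, -b) := by simp [Prod.ext_iff]
  rw [h, norm_pt, abs_neg, abs_neg]

lemma line_diag : dynLine (0,0) (1,1) = {p : Pt | ∃ k : ℝ, p = (k, k)} := by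
  unfold dynLine; ext p
  constructor <;> rintro ⟨k, rfl⟩ <;> exact ⟨k, by simp [Prod.ext_iff]⟩

lemma line_vert : dynLine (0,0) (0,1) = {p : Pt | ∃ k : ℝ, p = (0, k)} := by
  unfold dynLine; ext p
  constructor <;> rintro ⟨k, rfl⟩ <;> exact ⟨k, by simp [Prod.ext_iff]⟩

lemma line_horiz : dynLine (0,0) (1,0) = {p : Pt | ∃ k : ℝ, p = (k, 0)} := by
  unfold dynLine; ext p
  constructor <;> rintro ⟨k, rfl⟩ <;> exact ⟨k, by simp [Prod.ext_iff]⟩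

lemma delta_diag (n : ℕ) (k : ℝ) (hk : k ≠ 0) :
    dynDelta examplePiecewise n (0,0) (k, k) = 2 ^ n := by
  unfold dynDelta
  rw [iter_zero, iter_diag, norm_sub_zero, norm_sub_zero, max_self, max_self,
    abs_mul, abs_pow, abs_two]
  field_simp

lemma delta_vert (n : ℕ) (k : ℝ) (hk : k ≠ 0) :
    dynDelta examplePiecewise n (0,0) (0, k) = (2:ℝ)⁻¹ ^ n := by
  unfold dynDelta
  rw [iter_zero, iter_vert n k hk, norm_sub_zero, norm_sub_zero, abs_zero]
  rw [max_eq_right (abs_nonneg _), max_eq_right (abs_nonneg _), abs_div, abs_pow, abs_two,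
    inv_pow]
  rw [div_div, mul_comm, ← div_div, div_self (abs_ne_zero.mpr hk), one_div]

lemma delta_horiz (n : ℕ) (k : ℝ) (hk : k ≠ 0) :
    dynDelta examplePiecewise n (0,0) (k, 0) = 3 ^ n := by
  unfold dynDelta
  rw [iter_zero, iter_horiz n k hk, norm_sub_zero, norm_sub_zero, abs_zero,
    max_eq_left (abs_nonneg _), max_eq_left (abs_nonneg _), abs_mul, abs_pow]
  rw [show |(3:ℝ)| = 3 by norm_num]
  field_simp

lemma supDir_diag (n : ℕ) (δ : ℝ) (hδ : 0 < δ) :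
    dynSupDir examplePiecewise n (0,0) (1,1) δ = 2 ^ n := by
  unfold dynSupDir
  have himg : dynDelta examplePiecewise n (0,0) ''
      ((dynBall examplePiecewise (0,0) δ n \ {(0,0)}) ∩ dynLine (0,0) (1,1))
      = {(2:ℝ) ^ n} := by
    ext t
    simp only [mem_image, mem_inter_iff, mem_diff, mem_singleton_iff, line_diag,
      mem_setOf_eq]
    constructor
    · rintro ⟨y, ⟨⟨hball, hy0⟩, k, rfl⟩, rfl⟩
      have hk : k ≠ 0 := by
        intro h; exact hy0 (by simp [h, Prod.ext_iff])
      exact delta_diag n k hk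
    · rintro rfl
      set c : ℝ := δ / (2 * 2 ^ n) with hc
      have hcpos : 0 < c := by positivity
      refine ⟨(c, c), ⟨⟨?_, ?_⟩, ⟨c, rfl⟩⟩, delta_diag n c hcpos.ne'⟩
      · intro j hj
        rw [iter_zero, iter_diag, norm_sub_zero, max_self, abs_mul, abs_pow, abs_two,
          abs_of_pos hcpos]
        calc (2:ℝ) ^ j * c ≤ 2 ^ n * c := by
              have : (2:ℝ) ^ j ≤ 2 ^ n := pow_le_pow_right₀ (by norm_num) hj
              nlinarith
          _ = δ / 2 := by rw [hc]; field_simp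
          _ < δ := by linarith
      · simp only [Prod.mk.injEq, not_and]
        intro h; exact absurd h hcpos.ne'
  rw [himg, csSup_singleton]

lemma supDir_vert (n : ℕ) (δ : ℝ) (hδ : 0 < δ) :
    dynSupDir examplePiecewise n (0,0) (0,1) δ = (2:ℝ)⁻¹ ^ n := by
  unfold dynSupDir
  have himg : dynDelta examplePiecewise n (0,0) ''
      ((dynBall examplePiecewise (0,0) δ n \ {(0,0)}) ∩ dynLine (0,0) (0,1))
      = {(2:ℝ)⁻¹ ^ n} := by
    ext t
    simp only [mem_image, mem_inter_iff, mem_diff, mem_singleton_iff, line_vert,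
      mem_setOf_eq]
    constructor
    · rintro ⟨y, ⟨⟨hball, hy0⟩, k, rfl⟩, rfl⟩
      have hk : k ≠ 0 := by
        intro h; exact hy0 (by simp [h, Prod.ext_iff])
      exact delta_vert n k hk
    · rintro rfl
      set c : ℝ := δ / 2 with hc
      have hcpos : 0 < c := by positivity
      refine ⟨(0, c), ⟨⟨?_, ?_⟩, ⟨c, rfl⟩⟩, delta_vert n c hcpos.ne'⟩
      · intro j hj
        rw [iter_zero, iter_vert j c hcpos.ne', norm_sub_zero, abs_zero,
          max_eq_right (abs_nonneg _), abs_div, abs_pow, abs_two, abs_of_pos hcpos]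
        have h1 : (1:ℝ) ≤ 2 ^ j := one_le_pow₀ (by norm_num)
        calc c / 2 ^ j ≤ c := by
              rw [div_le_iff₀ (by positivity)]; nlinarith
          _ < δ := by rw [hc]; linarith
      · simp only [Prod.mk.injEq, not_and]
        intro _; exact hcpos.ne'
  rw [himg, csSup_singleton]

lemma supDir_horiz (n : ℕ) (δ : ℝ) (hδ : 0 < δ) :
    dynSupDir examplePiecewise n (0,0) (1,0) δ = 3 ^ n := by
  unfold dynSupDir
  have himg : dynDelta examplePiecewise n (0,0) ''
      ((dynBall examplePiecewise (0,0) δ n \ {(0,0)}) ∩ dynLine (0,0) (1,0))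
      = {(3:ℝ) ^ n} := by
    ext t
    simp only [mem_image, mem_inter_iff, mem_diff, mem_singleton_iff, line_horiz,
      mem_setOf_eq]
    constructor
    · rintro ⟨y, ⟨⟨hball, hy0⟩, k, rfl⟩, rfl⟩
      have hk : k ≠ 0 := by
        intro h; exact hy0 (by simp [h, Prod.ext_iff])
      exact delta_horiz n k hk
    · rintro rfl
      set c : ℝ := δ / (2 * 3 ^ n) with hc
      have hcpos : 0 < c := by positivity
      refine ⟨(c, 0), ⟨⟨?_, ?_⟩, ⟨c, rfl⟩⟩, delta_horiz n c hcpos.ne'⟩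
      · intro j hj
        rw [iter_zero, iter_horiz j c hcpos.ne', norm_sub_zero, abs_zero,
          max_eq_left (abs_nonneg _), abs_mul, abs_pow,
          show |(3:ℝ)| = 3 by norm_num, abs_of_pos hcpos]
        calc (3:ℝ) ^ j * c ≤ 3 ^ n * c := by
              have : (3:ℝ) ^ j ≤ 3 ^ n := pow_le_pow_right₀ (by norm_num) hj
              nlinarith
          _ = δ / 2 := by rw [hc]; field_simp
          _ < δ := by linarith
      · simp only [Prod.mk.injEq, not_and]
        intro h; exact absurd h hcpos.ne'
  rw [himg, csSup_singleton]


/-- the point `(0,0)` has at least three distinct directional new Lyapunov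
exponents for the (continuous, non-differentiable) piecewise example map:
`log 2` along `(1,1)`, `−log 2` along `(0,1)` and `log 3` along `(1,0)`. -/
theorem examplePiecewise_three_exponents :
    newLyapDir examplePiecewise (0, 0) (1, 1) = Real.log 2 ∧
    newLyapDir examplePiecewise (0, 0) (0, 1) = -Real.log 2 ∧
    newLyapDir examplePiecewise (0, 0) (1, 0) = Real.log 3 := by
  refine ⟨helper_newLyapDir _ _ _ 2 supDir_diag, ?_, helper_newLyapDir _ _ _ 3 supDir_horiz⟩
  rw [helper_newLyapDir _ _ _ 2⁻¹ supDir_vert, Real.log_inv]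

end
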